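/- For 0 < r < R and constants C, D with C − D√(1 − r²/R²) ≠ 0, the functions ν(r) = 2·log|C − D√(1 − r²/R²)| and λ(r) = −log(1 − r²/R²) satisfy the Karmarkar condition 2ν''(r) + (ν'(r))² = ν'(r)·λ'(r)·e^{λ(r)}/(e^{λ(r)} − 1). -/

import Mathlib

open Real Set

-- derivative of the inner function
lemma inner_deriv (R : ℝ) (x : ℝ) :
    HasDerivAt (fun x : ℝ => 1 - x ^ 2 / R ^ 2) (-(2 * x) / R ^ 2) x := by
  have h := ((hasDerivAt_pow 2 x).div_const (R ^ 2)).const_sub 1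
  refine h.congr_deriv ?_
  norm_num
  ring

lemma nu_deriv (R C D : ℝ) (x : ℝ) (hx : -R < x) (hxR : x < R) (hR : 0 < R)
    (hC : C - D * Real.sqrt (1 - x ^ 2 / R ^ 2) ≠ 0) :
    HasDerivAt (fun r => 2 * Real.log |C - D * Real.sqrt (1 - r ^ 2 / R ^ 2)|)
      (2 * D * x / (R ^ 2 * Real.sqrt (1 - x ^ 2 / R ^ 2) *
        (C - D * Real.sqrt (1 - x ^ 2 / R ^ 2)))) x := by
  have hu : 0 < 1 - x ^ 2 / R ^ 2 := by
    have hx2 : x ^ 2 < R ^ 2 := by nlinarith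
    have : x ^ 2 / R ^ 2 < 1 := by
      rw [div_lt_one (by positivity)]; exact hx2
    linarith
  have hs : 0 < Real.sqrt (1 - x ^ 2 / R ^ 2) := Real.sqrt_pos.mpr hu
  have h1 := inner_deriv R x
  have h2 : HasDerivAt (fun x : ℝ => Real.sqrt (1 - x ^ 2 / R ^ 2))
      (-(2 * x) / R ^ 2 / (2 * Real.sqrt (1 - x ^ 2 / R ^ 2))) x := h1.sqrt hu.ne'
  have h3 := (h2.const_mul D).const_sub C
  have h4 := (h3.log hC).const_mul 2
  have heq : (fun r => 2 * Real.log |C - D * Real.sqrt (1 - r ^ 2 / R ^ 2)|)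
      = (fun r => 2 * Real.log (C - D * Real.sqrt (1 - r ^ 2 / R ^ 2))) := by
    funext y; rw [Real.log_abs]
  rw [heq]
  refine h4.congr_deriv ?_
  set t := Real.sqrt (1 - x ^ 2 / R ^ 2) with ht
  field_simp

theorem schwarzschild_interior_karmarkar
    (R C D : ℝ) (hR : 0 < R) :
    ∀ r : ℝ, 0 < r → r < R →
      C - D * Real.sqrt (1 - r ^ 2 / R ^ 2) ≠ 0 →
      (fun (f g : ℝ → ℝ) =>
        2 * deriv (deriv f) r + (deriv f r) ^ 2
          = deriv f r * deriv g r * Real.exp (g r) / (Real.exp (g r) - 1))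
      (fun r => 2 * Real.log |C - D * Real.sqrt (1 - r ^ 2 / R ^ 2)|)
      (fun r => -Real.log (1 - r ^ 2 / R ^ 2)) := by
  intro r hr0 hrR hC
  dsimp only
  have hu : 0 < 1 - r ^ 2 / R ^ 2 := by
    have hx2 : r ^ 2 < R ^ 2 := by nlinarith
    have : r ^ 2 / R ^ 2 < 1 := by
      rw [div_lt_one (by positivity)]; exact hx2
    linarith
  set s : ℝ := Real.sqrt (1 - r ^ 2 / R ^ 2) with hsdef
  have hs : 0 < s := Real.sqrt_pos.mpr hu
  have hs2 : s ^ 2 = 1 - r ^ 2 / R ^ 2 := Real.sq_sqrt hu.le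
  have hc : Continuous (fun x : ℝ => C - D * Real.sqrt (1 - x ^ 2 / R ^ 2)) := by
    fun_prop
  have hopen : IsOpen (Ioo (-R) R ∩ (fun x : ℝ => C - D * Real.sqrt (1 - x ^ 2 / R ^ 2)) ⁻¹' {0}ᶜ) :=
    isOpen_Ioo.inter (isOpen_compl_singleton.preimage hc)
  have hmem : (Ioo (-R) R ∩ (fun x : ℝ => C - D * Real.sqrt (1 - x ^ 2 / R ^ 2)) ⁻¹' {0}ᶜ) ∈ nhds r :=
    hopen.mem_nhds ⟨⟨by linarith, hrR⟩, hC⟩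
  -- first derivative of nu as a function
  have hF1 : deriv (fun r => 2 * Real.log |C - D * Real.sqrt (1 - r ^ 2 / R ^ 2)|)
      =ᶠ[nhds r] (fun x => 2 * D * x / (R ^ 2 * Real.sqrt (1 - x ^ 2 / R ^ 2) *
        (C - D * Real.sqrt (1 - x ^ 2 / R ^ 2)))) := by
    filter_upwards [hmem] with x hx
    exact (nu_deriv R C D x hx.1.1 hx.1.2 hR hx.2).deriv
  have hd2 : deriv (deriv (fun r => 2 * Real.log |C - D * Real.sqrt (1 - r ^ 2 / R ^ 2)|)) r
      = deriv (fun x => 2 * D * x / (R ^ 2 * Real.sqrt (1 - x ^ 2 / R ^ 2) *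
        (C - D * Real.sqrt (1 - x ^ 2 / R ^ 2)))) r := hF1.deriv_eq
  have h1 := inner_deriv R r
  have h2 : HasDerivAt (fun x : ℝ => Real.sqrt (1 - x ^ 2 / R ^ 2))
      (-(2 * r) / R ^ 2 / (2 * s)) r := h1.sqrt hu.ne'
  have h3 : HasDerivAt (fun x : ℝ => C - D * Real.sqrt (1 - x ^ 2 / R ^ 2))
      (-(D * (-(2 * r) / R ^ 2 / (2 * s)))) r := (h2.const_mul D).const_sub C
  have hnum : HasDerivAt (fun x : ℝ => 2 * D * x) (2 * D) r := by
    simpa using (hasDerivAt_id r).const_mul (2 * D)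
  have hden : HasDerivAt (fun x : ℝ => R ^ 2 * Real.sqrt (1 - x ^ 2 / R ^ 2) *
      (C - D * Real.sqrt (1 - x ^ 2 / R ^ 2)))
      (R ^ 2 * (-(2 * r) / R ^ 2 / (2 * s)) * (C - D * s)
        + R ^ 2 * s * -(D * (-(2 * r) / R ^ 2 / (2 * s)))) r :=
    (h2.const_mul (R ^ 2)).mul h3
  have hdne : R ^ 2 * s * (C - D * s) ≠ 0 :=
    mul_ne_zero (mul_ne_zero (by positivity) hs.ne') hC
  have hF1d : HasDerivAt (fun x => 2 * D * x / (R ^ 2 * Real.sqrt (1 - x ^ 2 / R ^ 2) *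
        (C - D * Real.sqrt (1 - x ^ 2 / R ^ 2))))
      ((2 * D * (R ^ 2 * s * (C - D * s)) - 2 * D * r *
        (R ^ 2 * (-(2 * r) / R ^ 2 / (2 * s)) * (C - D * s)
          + R ^ 2 * s * -(D * (-(2 * r) / R ^ 2 / (2 * s)))))
        / (R ^ 2 * s * (C - D * s)) ^ 2) r := hnum.div hden hdne
  have hgd : HasDerivAt (fun x : ℝ => -Real.log (1 - x ^ 2 / R ^ 2))
      (-(-(2 * r) / R ^ 2 / (1 - r ^ 2 / R ^ 2))) r := (h1.log hu.ne').neg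
  rw [hd2, hF1d.deriv, (nu_deriv R C D r (by linarith) hrR hR hC).deriv, hgd.deriv]
  have hexp : Real.exp (-Real.log (1 - r ^ 2 / R ^ 2)) = (1 - r ^ 2 / R ^ 2)⁻¹ := by
    rw [Real.exp_neg, Real.exp_log hu]
  rw [hexp, ← hs2]
  have hs2lt : s ^ 2 < 1 := by
    rw [hs2]
    have : 0 < r ^ 2 / R ^ 2 := by positivity
    linarith
  have hexp1 : (s ^ 2)⁻¹ - 1 ≠ 0 := by
    have : (1:ℝ) < (s ^ 2)⁻¹ := by
      rw [lt_inv_comm₀ (by norm_num) (by positivity)]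
      simpa using hs2lt
    linarith
  have hr2 : r ^ 2 = R ^ 2 - R ^ 2 * s ^ 2 := by
    have hR2 : (R:ℝ) ^ 2 ≠ 0 := by positivity
    field_simp at hs2
    linarith [hs2]
  have hone : (1:ℝ) - s ^ 2 ≠ 0 := by nlinarith
  rw [Real.sqrt_sq hs.le]
  field_simp [hone]
  ring_nf
  rw [hr2]
  ring
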